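/- (Value of the switching policy dominates each base policy uniformly and is itself bounded.) Let π_1, …, π_n (n ≥ 1) be policies and let Π_ps(s) = π_{i*(s)}(s) with i*(s) attaining max_{1 ≤ i ≤ n} V^{π_i}(s). Then for every i and every state s, V^{π_i}(s) ≤ V^{Π_ps}(s) ≤ Rmax / (1 − β). -/

import Mathlib

/-- The Bellman operator for policy `π`:
`(T_π f)(s) = R(s) + β · Σ_{s'} P(s, π(s))(s') · f(s')`. -/
noncomputable def bellman {S A : Type*} (P : S → A → PMF S) (R : S → ℝ) (β : ℝ)
    (π : S → A) (f : S → ℝ) : S → ℝ :=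
  fun s => R s + β * ∑' s', ((P s (π s)) s').toReal * f s'

section helpers
variable {S : Type*}

lemma pmf_toReal_summable (p : PMF S) : Summable (fun s => (p s).toReal) :=
  ENNReal.summable_toReal p.tsum_coe_ne_top

lemma pmf_toReal_tsum (p : PMF S) : ∑' s, (p s).toReal = 1 := by
  rw [← ENNReal.tsum_toReal_eq (fun a => p.apply_ne_top a), p.tsum_coe, ENNReal.toReal_one]

lemma pmf_mul_summable (p : PMF S) (f : S → ℝ) {C : ℝ} (h : ∀ s, |f s| ≤ C) :
    Summable (fun s => (p s).toReal * f s) := by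
  apply Summable.of_abs
  apply Summable.of_nonneg_of_le (fun s => abs_nonneg _)
    (fun s => ?_) ((pmf_toReal_summable p).mul_right C)
  rw [abs_mul, abs_of_nonneg ENNReal.toReal_nonneg]
  exact mul_le_mul_of_nonneg_left (h s) ENNReal.toReal_nonneg

lemma pmf_tsum_le_const (p : PMF S) (f : S → ℝ) {C D : ℝ} (hb : ∀ s, |f s| ≤ C)
    (h : ∀ s, f s ≤ D) : ∑' s, (p s).toReal * f s ≤ D := by
  calc ∑' s, (p s).toReal * f s ≤ ∑' s, (p s).toReal * D := by
        apply Summable.tsum_le_tsum (fun s => mul_le_mul_of_nonneg_left (h s) ENNReal.toReal_nonneg)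
          (pmf_mul_summable p f hb) ((pmf_toReal_summable p).mul_right D)
    _ = D := by rw [tsum_mul_right, pmf_toReal_tsum, one_mul]

end helpers

/-- The value of the switching policy dominates each base policy uniformly and is
itself bounded: with `π_1, …, π_n` (`n ≥ 1`), value functions `V^{π_i}` (bounded
fixed points of the respective Bellman operators), and the switching policy
`Π_ps(s) = π_{i*(s)}(s)` where `i*(s)` attains `max_i V^{π_i}(s)`, we have
`V^{π_i}(s) ≤ V^{Π_ps}(s) ≤ Rmax / (1 − β)` for every `i` and every state `s`. -/
theorem switching_value_dominates_and_bounded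
    {S A : Type*} [Nonempty S] [Nonempty A]
    (P : S → A → PMF S) (R : S → ℝ) (Rmax : ℝ) (hR : ∀ s, |R s| ≤ Rmax)
    (β : ℝ) (hβ0 : 0 ≤ β) (hβ1 : β < 1)
    (n : ℕ) (hn : 1 ≤ n) (π : Fin n → S → A)
    (V : Fin n → S → ℝ)
    (hVbdd : ∀ i, ∃ C : ℝ, ∀ s, |V i s| ≤ C)
    (hVfix : ∀ i s, V i s = bellman P R β (π i) (V i) s)
    (istar : S → Fin n)
    (histar : ∀ s i, V i s ≤ V (istar s) s)
    (pps : S → A) (hpps : ∀ s, pps s = π (istar s) s)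
    (Vps : S → ℝ) (hVpsbdd : ∃ C : ℝ, ∀ s, |Vps s| ≤ C)
    (hVpsfix : ∀ s, Vps s = bellman P R β pps Vps s) :
    ∀ (i : Fin n) (s : S), V i s ≤ Vps s ∧ Vps s ≤ Rmax / (1 - β) := by
  obtain ⟨Cp, hCp⟩ := hVpsbdd
  choose g hg using hVbdd
  set W : S → ℝ := fun s => V (istar s) s with hW
  set C : ℝ := ∑ i : Fin n, |g i| with hC
  have hWb : ∀ s, |W s| ≤ C := by
    intro s
    refine (hg (istar s) s).trans ?_
    exact (le_abs_self _).trans (Finset.single_le_sum (f := fun i => |g i|)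
      (fun i _ => abs_nonneg _) (Finset.mem_univ _))
  have hβpos : 0 < 1 - β := by linarith
  set L : ℝ := Rmax / (1 - β) with hL
  have hRL : Rmax + β * L = L := by rw [hL]; field_simp [hβpos.ne']; ring
  -- subadditivity for W
  have hWstep : ∀ s, W s ≤ R s + β * ∑' s', ((P s (pps s)) s').toReal * W s' := by
    intro s
    have := hVfix (istar s) s
    rw [bellman, ← hpps s] at this
    rw [hW]; simp only
    rw [this]
    gcongr _ + _ * ?_
    refine Summable.tsum_le_tsum (fun s' => ?_) (pmf_mul_summable _ _ (hg (istar s)))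
      (pmf_mul_summable _ _ hWb)
    exact mul_le_mul_of_nonneg_left (histar s' (istar s)) ENNReal.toReal_nonneg
  -- Part 1: W ≤ Vps
  have hdiffb : ∀ s, |(fun t => W t - Vps t) s| ≤ C + Cp := fun s =>
    (abs_sub _ _).trans (add_le_add (hWb s) (hCp s))
  have key1 : ∀ k : ℕ, ∀ s, W s - Vps s ≤ β ^ k * (C + Cp) := by
    intro k
    induction k with
    | zero => intro s; simpa using (le_abs_self _).trans (hdiffb s)
    | succ k ih =>
      intro s
      have h1 := hWstep s
      have h2 := hVpsfix s
      rw [bellman] at h2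
      have hsub : ∑' s', ((P s (pps s)) s').toReal * W s'
          - ∑' s', ((P s (pps s)) s').toReal * Vps s'
          = ∑' s', ((P s (pps s)) s').toReal * (W s' - Vps s') := by
        rw [← Summable.tsum_sub (pmf_mul_summable _ _ hWb) (pmf_mul_summable _ _ hCp)]
        exact tsum_congr fun s' => (mul_sub _ _ _).symm
      have h3 : ∑' s', ((P s (pps s)) s').toReal * (W s' - Vps s') ≤ β ^ k * (C + Cp) :=
        pmf_tsum_le_const _ _ hdiffb ih
      have h4 : W s - Vps s ≤ β * ∑' s', ((P s (pps s)) s').toReal * W s'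
          - β * ∑' s', ((P s (pps s)) s').toReal * Vps s' := by linarith
      calc W s - Vps s ≤ β * (∑' s', ((P s (pps s)) s').toReal * (W s' - Vps s')) := by
              rw [← hsub, mul_sub]; exact h4
        _ ≤ β * (β ^ k * (C + Cp)) := mul_le_mul_of_nonneg_left h3 hβ0
        _ = β ^ (k + 1) * (C + Cp) := by ring
  have htend : ∀ (D : ℝ), Filter.Tendsto (fun k : ℕ => β ^ k * D) Filter.atTop (nhds 0) := by
    intro D
    simpa using (tendsto_pow_atTop_nhds_zero_of_lt_one hβ0 hβ1).mul_const D
  have hWle : ∀ s, W s ≤ Vps s := by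
    intro s
    have := ge_of_tendsto' (htend (C + Cp)) (fun k => key1 k s)
    linarith
  -- Part 2: Vps ≤ L
  set E : ℝ := Cp + |L| with hE
  have key2 : ∀ k : ℕ, ∀ s, Vps s ≤ L + β ^ k * E := by
    intro k
    induction k with
    | zero =>
      intro s
      have := neg_abs_le L
      have := (le_abs_self (Vps s)).trans (hCp s)
      simp only [pow_zero, one_mul, hE]; linarith
    | succ k ih =>
      intro s
      have h2 := hVpsfix s
      rw [bellman] at h2
      have h3 : ∑' s', ((P s (pps s)) s').toReal * Vps s' ≤ L + β ^ k * E :=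
        pmf_tsum_le_const _ _ hCp ih
      have h4 : β * (∑' s', ((P s (pps s)) s').toReal * Vps s') ≤ β * (L + β ^ k * E) :=
        mul_le_mul_of_nonneg_left h3 hβ0
      have h5 : R s ≤ Rmax := (le_abs_self _).trans (hR s)
      have h6 : β * (L + β ^ k * E) = β * L + β ^ (k + 1) * E := by ring
      linarith
  have hVpsle : ∀ s, Vps s ≤ L := by
    intro s
    have ht : Filter.Tendsto (fun k : ℕ => L + β ^ k * E) Filter.atTop (nhds L) := by
      simpa using (htend E).const_add L
    exact ge_of_tendsto' ht (fun k => key2 k s)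
  intro i s
  exact ⟨(histar s i).trans (hWle s), hVpsle s⟩
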